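/- Let (α_n)_{n≥0} be a nested sequence in SL(2,ℝ), set β_n := α_0 * α_1 * ⋯ * α_n and r_n := − Real.log (Im (β_n⁻¹ • i)). Then for every n ≥ 0, |r_{n+1} − r_n| ≤ ℓ(α_{n+1}). -/

import Mathlib

open UpperHalfPlane Matrix Real Filter Topology
open scoped MatrixGroups

noncomputable section

namespace BellisFormal

/-- The point `eᵗ i` of the upper half-plane. -/
def vray (t : ℝ) : ℍ := ⟨⟨0, Real.exp t⟩, Real.exp_pos t⟩

/-- Translation length of `γ`. -/
def transLength (γ : SL(2, ℝ)) : ℝ := ⨅ z : ℍ, dist z (γ • z)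

/-- `γ` is hyperbolic: `|tr γ| > 2`. -/
def IsHyperbolic (γ : SL(2, ℝ)) : Prop :=
  2 < |Matrix.trace (γ : Matrix (Fin 2) (Fin 2) ℝ)|

/-- Axis of `γ`. -/
def Axis (γ : SL(2, ℝ)) : Set ℍ := {z : ℍ | dist z (γ • z) = transLength γ}

/-- `x` is a real fixed point of the Möbius map of `γ`. -/
def IsFixedPt (γ : SL(2, ℝ)) (x : ℝ) : Prop :=
  γ 1 0 * x ^ 2 + (γ 1 1 - γ 0 0) * x - γ 0 1 = 0

def IsAttractingFixedPt (γ : SL(2, ℝ)) (x : ℝ) : Prop :=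
  IsFixedPt γ x ∧ 1 < (γ 1 0 * x + γ 1 1) ^ 2

def IsRepellingFixedPt (γ : SL(2, ℝ)) (x : ℝ) : Prop :=
  IsFixedPt γ x ∧ (γ 1 0 * x + γ 1 1) ^ 2 < 1

instance : TopologicalSpace SL(2, ℝ) :=
  TopologicalSpace.induced (fun g => (g : Matrix (Fin 2) (Fin 2) ℝ)) inferInstance

structure IsNestedSequence (γ : ℕ → SL(2, ℝ)) (γp γm : ℕ → ℝ) (t : ℕ → ℝ) : Prop where
  hyperbolic : ∀ n, IsHyperbolic (γ n)
  discrete : DiscreteTopology (Subgroup.closure (Set.range γ) : Subgroup SL(2, ℝ))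
  attracting : ∀ n, IsAttractingFixedPt (γ n) (γp n)
  repelling : ∀ n, IsRepellingFixedPt (γ n) (γm n)
  plus_pos : ∀ n, 0 < γp n
  plus_mono : StrictMono γp
  minus_neg : ∀ n, γm n < 0
  minus_anti : StrictAnti γm
  t_pos : ∀ n, 0 < t n
  axis_meets : ∀ n, ∀ s : ℝ, 0 ≤ s → (vray s ∈ Axis (γ n) ↔ s = t n)
  len_anti : StrictAnti fun n => transLength (γ n)
  len_tendsto : Filter.Tendsto (fun n => transLength (γ n)) Filter.atTop (nhds 0)

/-- geodesic flow matrix -/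
def A (t : ℝ) : SL(2, ℝ) :=
  ⟨!![Real.exp (t / 2), 0; 0, Real.exp (-(t / 2))], by
    simp [Matrix.det_fin_two_of, ← Real.exp_add]⟩

/-- horocyclic flow matrix -/
def N (s : ℝ) : SL(2, ℝ) :=
  ⟨!![1, s; 0, 1], by simp [Matrix.det_fin_two_of]⟩

/-- the distance `d₁` between unit tangent vectors encoded as elements of `SL(2,ℝ)` -/
def d1 (g h : SL(2, ℝ)) : ℝ :=
  dist (g • vray 0) (h • vray 0) + dist (g • vray 1) (h • vray 1)

/-- product `α 0 * α 1 * ⋯ * α n` -/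
def seqProd (α : ℕ → SL(2, ℝ)) (n : ℕ) : SL(2, ℝ) :=
  ((List.range (n + 1)).map α).prod


/-- the point `a + y i` of the upper half-plane -/
def mkPt (a y : ℝ) (hy : 0 < y) : ℍ := ⟨⟨a, y⟩, hy⟩

/-- the Busemann cocycle values `r_n = B_∞(β_n⁻¹ • i, i)` -/
def busR (α : ℕ → SL(2, ℝ)) (n : ℕ) : ℝ :=
  - Real.log (((seqProd α n)⁻¹ • UpperHalfPlane.I).im)



section Aux

set_option maxHeartbeats 1600000

open Complex in
lemma det_ent (γ : SL(2,ℝ)) : γ 0 0 * γ 1 1 - γ 0 1 * γ 1 0 = 1 := by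
  have := γ.2
  rwa [Matrix.det_fin_two] at this

lemma smul_coe' (γ : SL(2, ℝ)) (z : ℍ) :
    ((γ • z : ℍ) : ℂ) = ((γ 0 0 : ℝ) * z + γ 0 1) / ((γ 1 0 : ℝ) * z + γ 1 1) := by
  rw [UpperHalfPlane.specialLinearGroup_apply]; simp

lemma denom_ne' (γ : SL(2, ℝ)) (z : ℍ) : ((γ 1 0 : ℝ) : ℂ) * z + γ 1 1 ≠ 0 := by
  intro h
  have hdet := det_ent γ
  by_cases hr : γ 1 0 = 0
  · rw [hr] at h hdet
    push_cast [hr] at h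
    simp only [zero_mul, zero_add, Complex.ofReal_eq_zero] at h
    rw [h] at hdet; simp at hdet
  · have him := congrArg Complex.im h
    simp only [Complex.add_im, Complex.mul_im, Complex.ofReal_re, Complex.ofReal_im,
      Complex.zero_im, zero_mul, add_zero] at him
    have h2 : γ 1 0 * z.im = 0 := by simpa using him
    have hz := z.im_pos
    rcases mul_eq_zero.mp h2 with h1 | h2
    · exact hr h1
    · linarith

lemma im_smul_sl (γ : SL(2, ℝ)) (z : ℍ) :
    ((γ • z : ℍ)).im = z.im / Complex.normSq (((γ 1 0 : ℝ) : ℂ) * z + γ 1 1) := by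
  have h := smul_coe' γ z
  have hd := denom_ne' γ z
  have hdet := det_ent γ
  have hnsq : Complex.normSq (((γ 1 0 : ℝ) : ℂ) * z + γ 1 1) ≠ 0 :=
    (Complex.normSq_pos.mpr hd).ne'
  rw [← UpperHalfPlane.coe_im, h, Complex.div_im, ← UpperHalfPlane.coe_im (z := z)]
  rw [div_sub_div_same, div_eq_div_iff hnsq hnsq]
  simp only [Complex.add_im, Complex.add_re, Complex.mul_im, Complex.mul_re,
    Complex.ofReal_re, Complex.ofReal_im, zero_mul, sub_zero, add_zero, mul_zero]
  ring_nf
  linear_combination ((z:ℂ).im * Complex.normSq ((γ 1 0 : ℝ) * (z:ℂ) + ((γ 1 1 : ℝ):ℂ))) * hdet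

lemma dist_smul_eq' (γ : SL(2, ℝ)) (z : ℍ) :
    dist z (γ • z) = 2 * arsinh (‖((γ 1 0 : ℝ) : ℂ) * (z:ℂ)^2 + (((γ 1 1 : ℝ):ℂ) - ((γ 0 0 : ℝ):ℂ)) * z - ((γ 0 1 : ℝ):ℂ)‖
      / (2 * z.im)) := by
  set D : ℂ := ((γ 1 0 : ℝ) : ℂ) * z + γ 1 1 with hD
  have hd : D ≠ 0 := denom_ne' γ z
  have habsD : 0 < ‖D‖ := norm_pos_iff.mpr hd
  rw [UpperHalfPlane.dist_eq]
  congr 1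
  have him : ((γ • z : ℍ)).im = z.im / Complex.normSq D := im_smul_sl γ z
  have hzim : (0:ℝ) < z.im := z.im_pos
  have hsqrt : √(z.im * (γ • z).im) = z.im / ‖D‖ := by
    rw [him]
    rw [← Complex.sq_norm]
    rw [show z.im * (z.im / (‖D‖)^2) = (z.im / ‖D‖)^2 by field_simp]
    exact Real.sqrt_sq (by positivity)
  have hnum : dist (z:ℂ) ((γ • z : ℍ):ℂ) = ‖((γ 1 0 : ℝ) : ℂ) * (z:ℂ)^2 + (((γ 1 1 : ℝ):ℂ) - ((γ 0 0 : ℝ):ℂ)) * z - ((γ 0 1 : ℝ):ℂ)‖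
      / ‖D‖ := by
    rw [Complex.dist_eq, smul_coe' γ z, ← norm_div]
    congr 1
    have hd' := denom_ne' γ z
    rw [hD, eq_div_iff hd', sub_mul, div_mul_cancel₀ _ hd']
    ring
  rw [hsqrt, hnum]
  field_simp

lemma re_prod (Z : ℂ) (a b : ℝ) :
    ((Z - a) * (starRingEnd ℂ) (Z - b)).re = (Z.re - a) * (Z.re - b) + Z.im^2 := by
  simp [Complex.mul_re, Complex.sub_re, Complex.sub_im, Complex.conj_re, Complex.conj_im,
    Complex.ofReal_re, Complex.ofReal_im]
  ring

lemma im_prod (Z : ℂ) (a b : ℝ) :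
    ((Z - a) * (starRingEnd ℂ) (Z - b)).im = (a - b) * Z.im := by
  simp [Complex.mul_im, Complex.sub_re, Complex.sub_im, Complex.conj_re, Complex.conj_im,
    Complex.ofReal_re, Complex.ofReal_im]
  ring

lemma abs_prod_ge (Z : ℂ) (a b : ℝ) :
    (a - b) * Z.im ≤ ‖Z - a‖ * ‖Z - b‖ := by
  have h1 : ‖Z - a‖ * ‖Z - b‖
      = ‖(Z - a) * (starRingEnd ℂ) (Z - b)‖ := by
    rw [norm_mul, Complex.norm_conj]
  rw [h1]
  calc (a - b) * Z.im = ((Z - a) * (starRingEnd ℂ) (Z - b)).im := (im_prod Z a b).symm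
    _ ≤ |((Z - a) * (starRingEnd ℂ) (Z - b)).im| := le_abs_self _
    _ ≤ _ := Complex.abs_im_le_norm _

lemma abs_prod_eq_case (Z : ℂ) (a b : ℝ)
    (h : ‖Z - a‖ * ‖Z - b‖ = (a - b) * Z.im) :
    (Z.re - a) * (Z.re - b) + Z.im^2 = 0 := by
  set A := (Z - a) * (starRingEnd ℂ) (Z - b) with hA
  have h1 : ‖A‖ = A.im := by
    rw [hA, norm_mul, Complex.norm_conj, h, ← im_prod Z a b]
  have h2 : A.re^2 + A.im^2 = A.im^2 := by
    have h4 := Complex.sq_norm A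
    rw [h1, Complex.normSq_apply] at h4
    nlinarith [h4]
  have h3 : A.re = 0 := by nlinarith [sq_nonneg A.re]
  rw [← re_prod Z a b, h3]

section Alg
variable {p q r s xp xm : ℝ}

lemma hsum' (hlt : xm < xp) (hfp : r * xp ^ 2 + (s - p) * xp - q = 0)
    (hfm : r * xm ^ 2 + (s - p) * xm - q = 0) : r * (xp + xm) = p - s := by
  have h1 : (xp - xm) * (r * (xp + xm) + (s - p)) = 0 := by linear_combination hfp - hfm
  rcases mul_eq_zero.mp h1 with h | h
  · linarith [sub_pos.mpr hlt]
  · linarith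

lemma hprod' (hlt : xm < xp) (hfp : r * xp ^ 2 + (s - p) * xp - q = 0)
    (hfm : r * xm ^ 2 + (s - p) * xm - q = 0) : r * (xp * xm) = -q := by
  have hs := hsum' hlt hfp hfm
  linear_combination xp * hs - hfp

lemma hmul' (hdet : p * s - q * r = 1) (hlt : xm < xp)
    (hfp : r * xp ^ 2 + (s - p) * xp - q = 0)
    (hfm : r * xm ^ 2 + (s - p) * xm - q = 0) :
    (r * xp + s) * (r * xm + s) = 1 := by
  have hs := hsum' hlt hfp hfm
  have hp := hprod' hlt hfp hfm
  linear_combination r * hp + s * hs + hdet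

lemma hnup' (hlt : xm < xp) (hfp : r * xp ^ 2 + (s - p) * xp - q = 0)
    (hfm : r * xm ^ 2 + (s - p) * xm - q = 0) : p - r * xp = r * xm + s := by
  have hs := hsum' hlt hfp hfm; linarith

lemma hmum' (hlt : xm < xp) (hfp : r * xp ^ 2 + (s - p) * xp - q = 0)
    (hfm : r * xm ^ 2 + (s - p) * xm - q = 0) : p - r * xm = r * xp + s := by
  have hs := hsum' hlt hfp hfm; linarith

lemma hrne' (hatt : 1 < (r * xp + s) ^ 2) (hrep : (r * xm + s) ^ 2 < 1) : r ≠ 0 := by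
  intro h; rw [h] at hatt hrep; simp at hatt hrep; nlinarith

end Alg

lemma interval_bound {μ ν u w : ℝ} (hμν : μ * ν = 1) (hμ : 1 < μ ^ 2) (hw : 0 ≤ w)
    (hcond : (u - ν) * (u - μ) + w ≤ 0) : (μ ^ 2)⁻¹ ≤ u ^ 2 + w ∧ u ^ 2 + w ≤ μ ^ 2 := by
  have hμ0 : μ ≠ 0 := by intro h; rw [h] at hμν; simp at hμν
  have hν : ν = μ⁻¹ := by field_simp; linarith [hμν]
  rcases lt_or_gt_of_ne hμ0 with hneg | hpos
  · have hμlt : μ < -1 := by nlinarith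
    have hνlt : -1 < ν ∧ ν < 0 := by
      constructor <;> [nlinarith; nlinarith]
    have hu1 : μ ≤ u := by nlinarith
    have hu2 : u ≤ ν := by nlinarith
    constructor
    · have : ν ^ 2 = (μ ^ 2)⁻¹ := by rw [hν]; field_simp
      nlinarith
    · nlinarith
  · have hμlt : 1 < μ := by nlinarith
    have hνlt : 0 < ν ∧ ν < 1 := by constructor <;> [nlinarith; nlinarith]
    have hu1 : ν ≤ u := by nlinarith
    have hu2 : u ≤ μ := by nlinarith
    constructor
    · have : ν ^ 2 = (μ ^ 2)⁻¹ := by rw [hν]; field_simp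
      nlinarith
    · nlinarith

lemma D_mono {a b a' b' x y : ℝ} (hy : 0 < y) (hba : b < a) (ha : a ≤ a') (hb : b' ≤ b)
    (h : (x - a) * (x - b) + y ^ 2 ≤ 0) : (x - a') * (x - b') + y ^ 2 ≤ 0 := by
  have h1 : b < x := by nlinarith
  have h2 : x < a := by nlinarith
  nlinarith [mul_nonneg (sub_nonneg.mpr ha) (le_of_lt (sub_pos.mpr h1)),
    mul_nonneg (sub_nonneg.mpr hb) (le_of_lt (sub_pos.mpr h2)),
    mul_nonneg (sub_nonneg.mpr ha) (sub_nonneg.mpr hb)]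

lemma abs_mu_nu {μ ν : ℝ} (hμν : μ * ν = 1) (hμ : 1 < μ ^ 2) :
    |μ - ν| = |μ| - |μ|⁻¹ := by
  have hμ0 : μ ≠ 0 := by intro h; rw [h] at hμν; simp at hμν
  have hν : ν = μ⁻¹ := by field_simp; linarith [hμν]
  rcases lt_or_gt_of_ne hμ0 with hneg | hpos
  · have hμlt : μ < -1 := by nlinarith
    have hinv : μ⁻¹ < 0 := inv_lt_zero.mpr hneg
    have : μ - ν < 0 := by rw [hν]; nlinarith
    rw [abs_of_neg this, abs_of_neg hneg, hν, inv_neg]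
    ring
  · have hμlt : 1 < μ := by nlinarith
    have hνpos : 0 < ν := by nlinarith
    have : 0 < μ - ν := by nlinarith
    rw [abs_of_pos this, abs_of_pos hpos, hν]

lemma inv00 (γ : SL(2,ℝ)) : γ⁻¹ 0 0 = γ 1 1 := by
  rw [Matrix.SpecialLinearGroup.SL2_inv_expl]; rfl
lemma inv01 (γ : SL(2,ℝ)) : γ⁻¹ 0 1 = -γ 0 1 := by
  rw [Matrix.SpecialLinearGroup.SL2_inv_expl]; rfl
lemma inv10 (γ : SL(2,ℝ)) : γ⁻¹ 1 0 = -γ 1 0 := by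
  rw [Matrix.SpecialLinearGroup.SL2_inv_expl]; rfl
lemma inv11 (γ : SL(2,ℝ)) : γ⁻¹ 1 1 = γ 0 0 := by
  rw [Matrix.SpecialLinearGroup.SL2_inv_expl]; rfl

section TL
variable (γ : SL(2,ℝ)) (xp xm : ℝ)

lemma Qfact (hlt : xm < xp) (hfp : IsFixedPt γ xp) (hfm : IsFixedPt γ xm) (Z : ℂ) :
    ((γ 1 0 : ℝ) : ℂ) * Z^2 + (((γ 1 1 : ℝ):ℂ) - ((γ 0 0 : ℝ):ℂ)) * Z - ((γ 0 1 : ℝ):ℂ)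
      = ((γ 1 0 : ℝ):ℂ) * (Z - xp) * (Z - xm) := by
  have hs := hsum' hlt hfp hfm
  have hp := hprod' hlt hfp hfm
  have hsC : ((γ 1 0:ℝ):ℂ) * ((xp:ℂ) + xm) = ((γ 0 0:ℝ):ℂ) - ((γ 1 1:ℝ):ℂ) := by
    exact_mod_cast congrArg (fun t : ℝ => (t:ℂ)) hs
  have hpC : ((γ 1 0:ℝ):ℂ) * ((xp:ℂ) * xm) = -((γ 0 1:ℝ):ℂ) := by
    exact_mod_cast congrArg (fun t : ℝ => (t:ℂ)) hp
  linear_combination Z * hsC - hpC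

lemma sinh_half (hdet : (γ 0 0) * γ 1 1 - γ 0 1 * γ 1 0 = 1) (hlt : xm < xp)
    (hfp : IsFixedPt γ xp) (hfm : IsFixedPt γ xm)
    (hatt : 1 < (γ 1 0 * xp + γ 1 1) ^ 2) :
    Real.sinh (Real.log ((γ 1 0 * xp + γ 1 1) ^ 2) / 2) = (xp - xm) * |γ 1 0| / 2 := by
  set μ := γ 1 0 * xp + γ 1 1 with hμdef
  set ν := γ 1 0 * xm + γ 1 1 with hνdef
  have hμν : μ * ν = 1 := hmul' hdet hlt hfp hfm
  have habs : 1 < |μ| := by nlinarith [_root_.sq_abs μ, abs_nonneg μ]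
  have h2 : Real.log (μ ^ 2) / 2 = Real.log |μ| := by
    rw [Real.log_pow, Real.log_abs]; ring
  rw [h2, Real.sinh_log (by linarith : (0:ℝ) < |μ|)]
  have h5 : |μ| - |μ|⁻¹ = |μ - ν| := (abs_mu_nu hμν (by nlinarith [_root_.sq_abs μ, abs_nonneg μ])).symm
  rw [h5]
  have h6 : μ - ν = γ 1 0 * (xp - xm) := by rw [hμdef, hνdef]; ring
  rw [h6, abs_mul, abs_of_pos (by linarith : (0:ℝ) < xp - xm)]
  ring

lemma dist_ge (hdet : (γ 0 0) * γ 1 1 - γ 0 1 * γ 1 0 = 1) (hlt : xm < xp)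
    (hfp : IsFixedPt γ xp) (hfm : IsFixedPt γ xm)
    (hatt : 1 < (γ 1 0 * xp + γ 1 1) ^ 2) (z : ℍ) :
    Real.log ((γ 1 0 * xp + γ 1 1) ^ 2) ≤ dist z (γ • z) := by
  rw [dist_smul_eq', Qfact γ xp xm hlt hfp hfm]
  have him : (0:ℝ) < z.im := z.im_pos
  have h1 : (xp - xm) * |γ 1 0| / 2 ≤
      ‖((γ 1 0:ℝ):ℂ) * ((z:ℂ) - xp) * ((z:ℂ) - xm)‖ / (2 * z.im) := by
    rw [div_le_div_iff₀ (by norm_num) (by linarith)]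
    have h7 := abs_prod_ge (z:ℂ) xp xm
    rw [norm_mul, norm_mul, Complex.norm_real, Real.norm_eq_abs]
    rw [UpperHalfPlane.coe_im] at h7
    nlinarith [abs_nonneg (γ 1 0), h7, mul_le_mul_of_nonneg_left h7 (abs_nonneg (γ 1 0))]
  calc Real.log ((γ 1 0 * xp + γ 1 1) ^ 2)
      = 2 * Real.arsinh (Real.sinh (Real.log ((γ 1 0 * xp + γ 1 1) ^ 2) / 2)) := by
        rw [Real.arsinh_sinh]; ring
    _ ≤ _ := by
        rw [sinh_half γ xp xm hdet hlt hfp hfm hatt]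
        have := Real.arsinh_le_arsinh.mpr h1
        linarith

lemma transLength_eq (hdet : (γ 0 0) * γ 1 1 - γ 0 1 * γ 1 0 = 1) (hlt : xm < xp)
    (hfp : IsFixedPt γ xp) (hfm : IsFixedPt γ xm)
    (hatt : 1 < (γ 1 0 * xp + γ 1 1) ^ 2) (hrep : (γ 1 0 * xm + γ 1 1) ^ 2 < 1) :
    transLength γ = Real.log ((γ 1 0 * xp + γ 1 1) ^ 2) := by
  have hR : (0:ℝ) < (xp - xm) / 2 := by linarith
  set z₀ : ℍ := ⟨⟨(xp + xm) / 2, (xp - xm) / 2⟩, hR⟩ with hz₀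
  have hr0 : γ 1 0 ≠ 0 := hrne' hatt hrep
  refine le_antisymm ?_ (le_ciInf (dist_ge γ xp xm hdet hlt hfp hfm hatt))
  have hne : xp - xm ≠ 0 := sub_ne_zero.mpr (ne_of_gt hlt)
  have hub : dist z₀ (γ • z₀) = Real.log ((γ 1 0 * xp + γ 1 1) ^ 2) := by
    rw [dist_smul_eq', Qfact γ xp xm hlt hfp hfm]
    have hcoe : ((z₀ : ℍ) : ℂ) = ((xp + xm)/2 : ℝ) + (((xp - xm)/2 : ℝ)) * Complex.I := by
      rw [hz₀]
      apply Complex.ext <;> simp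
    have hprod : ((z₀:ℂ) - xp) * ((z₀:ℂ) - xm) = ((-2 * ((xp - xm)/2)^2 : ℝ) : ℂ) := by
      rw [hcoe]
      push_cast
      linear_combination (((xp:ℂ) - xm)/2)^2 * Complex.I_sq
    have him : z₀.im = (xp - xm) / 2 := rfl
    rw [mul_assoc, hprod, him, ← Complex.ofReal_mul, Complex.norm_real, Real.norm_eq_abs]
    have habs : |γ 1 0 * (-2 * ((xp - xm) / 2)^2)| = |γ 1 0| * ((xp-xm)/2) * (xp-xm) := by
      rw [abs_mul]
      rw [abs_of_nonpos (by nlinarith : -2*((xp - xm)/2)^2 ≤ 0)]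
      ring
    rw [habs]
    have harg : |γ 1 0| * ((xp-xm)/2) * (xp-xm) / (2 * ((xp-xm)/2))
        = (xp - xm) * |γ 1 0| / 2 := by
      rw [show (2:ℝ) * ((xp-xm)/2) = xp - xm by ring]
      field_simp
    rw [harg, ← sinh_half γ xp xm hdet hlt hfp hfm hatt, Real.arsinh_sinh]
    ring
  rw [← hub]
  exact ciInf_le ⟨0, by rintro x ⟨w, rfl⟩; exact dist_nonneg⟩ z₀

lemma axis_circle (hdet : (γ 0 0) * γ 1 1 - γ 0 1 * γ 1 0 = 1) (hlt : xm < xp)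
    (hfp : IsFixedPt γ xp) (hfm : IsFixedPt γ xm)
    (hatt : 1 < (γ 1 0 * xp + γ 1 1) ^ 2) (hrep : (γ 1 0 * xm + γ 1 1) ^ 2 < 1)
    (w : ℍ) (hw : dist w (γ • w) = transLength γ) :
    ((w:ℂ).re - xp) * ((w:ℂ).re - xm) + (w:ℂ).im ^ 2 = 0 := by
  have hr0 : γ 1 0 ≠ 0 := hrne' hatt hrep
  have habs : |γ 1 0| ≠ 0 := abs_ne_zero.mpr hr0
  have him : (0:ℝ) < w.im := w.im_pos
  rw [transLength_eq γ xp xm hdet hlt hfp hfm hatt hrep, dist_smul_eq',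
    Qfact γ xp xm hlt hfp hfm] at hw
  have h2 : ‖((γ 1 0:ℝ):ℂ) * ((w:ℂ) - xp) * ((w:ℂ) - xm)‖ / (2 * w.im)
      = (xp - xm) * |γ 1 0| / 2 := by
    have hA : arsinh (‖((γ 1 0:ℝ):ℂ) * ((w:ℂ) - xp) * ((w:ℂ) - xm)‖ / (2 * w.im))
        = Real.log ((γ 1 0 * xp + γ 1 1) ^ 2) / 2 := by linarith
    have h3 : ‖((γ 1 0:ℝ):ℂ) * ((w:ℂ) - xp) * ((w:ℂ) - xm)‖ / (2 * w.im)
        = Real.sinh (Real.log ((γ 1 0 * xp + γ 1 1) ^ 2) / 2) := by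
      rw [← hA, Real.sinh_arsinh]
    rw [h3, sinh_half γ xp xm hdet hlt hfp hfm hatt]
  rw [norm_mul, norm_mul, Complex.norm_real, Real.norm_eq_abs,
    div_eq_iff (by linarith : (2:ℝ) * w.im ≠ 0)] at h2
  have h4 : |γ 1 0| * (‖(w:ℂ) - xp‖ * ‖(w:ℂ) - xm‖)
      = |γ 1 0| * ((xp - xm) * w.im) := by linear_combination h2
  have h5 := mul_left_cancel₀ habs h4
  exact abs_prod_eq_case (w:ℂ) xp xm (by rw [UpperHalfPlane.coe_im]; exact h5)

lemma step (hlt : xm < xp)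
    (hfp : IsFixedPt γ xp) (hfm : IsFixedPt γ xm)
    (hatt : 1 < (γ 1 0 * xp + γ 1 1)^2) (hrep : (γ 1 0 * xm + γ 1 1)^2 < 1)
    (z : ℍ) (hz : ((z:ℂ).re - xp) * ((z:ℂ).re - xm) + (z:ℂ).im^2 ≤ 0) :
    |Real.log ((γ⁻¹ • z : ℍ).im) - Real.log z.im| ≤ transLength γ ∧
    (((γ⁻¹ • z : ℍ):ℂ).re - xp) * (((γ⁻¹ • z : ℍ):ℂ).re - xm) + ((γ⁻¹ • z : ℍ):ℂ).im^2 ≤ 0 := by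
  have hdet := det_ent γ
  set p := γ 0 0 with hp
  set q := γ 0 1 with hq
  set r := γ 1 0 with hr
  set s := γ 1 1 with hs
  set Z : ℂ := (z : ℂ) with hZ
  set W : ℂ := ((γ⁻¹ • z : ℍ) : ℂ) with hW
  set D : ℂ := -((r:ℝ):ℂ) * Z + ((p:ℝ):ℂ) with hD
  have hWeq : W = (((s:ℝ):ℂ) * Z + ((-q : ℝ):ℂ)) / D := by
    rw [hW, smul_coe' γ⁻¹ z, inv00, inv01, inv10, inv11]
    push_cast
    simp only [hD, hr, hp, hZ, hs, hq]
  have hDne : D ≠ 0 := by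
    have := denom_ne' γ⁻¹ z
    rw [inv10, inv11] at this
    rw [hD]
    intro hcon
    apply this
    push_cast at hcon ⊢
    linear_combination hcon
  have hfpC : ((r:ℝ):ℂ) * (xp:ℂ)^2 + (((s:ℝ):ℂ) - ((p:ℝ):ℂ)) * (xp:ℂ) - ((q:ℝ):ℂ) = 0 := by
    exact_mod_cast congrArg (fun t : ℝ => (t:ℂ)) hfp
  have hfmC : ((r:ℝ):ℂ) * (xm:ℂ)^2 + (((s:ℝ):ℂ) - ((p:ℝ):ℂ)) * (xm:ℂ) - ((q:ℝ):ℂ) = 0 := by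
    exact_mod_cast congrArg (fun t : ℝ => (t:ℂ)) hfm
  have h1 : (W - (xp:ℂ)) * D = ((r * xp + s : ℝ):ℂ) * (Z - xp) := by
    rw [hWeq]
    field_simp
    push_cast; rw [hD]; linear_combination hfpC
  have h2 : (W - (xm:ℂ)) * D = ((r * xm + s : ℝ):ℂ) * (Z - xm) := by
    rw [hWeq]
    field_simp
    push_cast; rw [hD]; linear_combination hfmC
  have h2c : ((starRingEnd ℂ) (W - (xm:ℂ))) * ((starRingEnd ℂ) D)
      = ((r * xm + s : ℝ):ℂ) * ((starRingEnd ℂ) (Z - xm)) := by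
    have := congrArg (starRingEnd ℂ) h2
    rw [_root_.map_mul, _root_.map_mul, Complex.conj_ofReal] at this
    exact this
  have hmulC : ((r * xp + s : ℝ):ℂ) * ((r * xm + s : ℝ):ℂ) = 1 := by
    have := hmul' hdet hlt hfp hfm
    exact_mod_cast congrArg (fun t : ℝ => (t:ℂ)) this
  have hbig : ((W - (xp:ℂ)) * (starRingEnd ℂ) (W - (xm:ℂ))) * (D * (starRingEnd ℂ) D)
      = (Z - (xp:ℂ)) * (starRingEnd ℂ) (Z - (xm:ℂ)) := by
    calc ((W - (xp:ℂ)) * (starRingEnd ℂ) (W - (xm:ℂ))) * (D * (starRingEnd ℂ) D)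
        = ((W - (xp:ℂ)) * D) * (((starRingEnd ℂ) (W - (xm:ℂ))) * ((starRingEnd ℂ) D)) := by ring
      _ = (((r * xp + s : ℝ):ℂ) * (Z - xp)) * (((r * xm + s : ℝ):ℂ) * ((starRingEnd ℂ) (Z - xm))) := by
          rw [h1, h2c]
      _ = (((r * xp + s : ℝ):ℂ) * ((r * xm + s : ℝ):ℂ)) * ((Z - (xp:ℂ)) * (starRingEnd ℂ) (Z - xm)) := by ring
      _ = _ := by rw [hmulC, one_mul]
  have hDD : D * (starRingEnd ℂ) D = ((Complex.normSq D : ℝ) : ℂ) := Complex.mul_conj D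
  have hre : ((W - (xp:ℂ)) * (starRingEnd ℂ) (W - (xm:ℂ))).re * Complex.normSq D
      = ((Z - (xp:ℂ)) * (starRingEnd ℂ) (Z - (xm:ℂ))).re := by
    have := congrArg Complex.re hbig
    rw [hDD] at this
    rw [← this]
    simp [Complex.mul_re, Complex.ofReal_re, Complex.ofReal_im]
  have hnsq : 0 < Complex.normSq D := Complex.normSq_pos.mpr hDne
  have hreW := re_prod W xp xm
  have hreZ := re_prod Z xp xm
  have hmem : (W.re - xp) * (W.re - xm) + W.im^2 ≤ 0 := by
    have h6 : ((W.re - xp) * (W.re - xm) + W.im^2) * Complex.normSq D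
        = (Z.re - xp) * (Z.re - xm) + Z.im^2 := by
      rw [← hreW, ← hreZ]; exact hre
    nlinarith [hnsq, hz, h6]
  refine ⟨?_, hmem⟩
  have himq : ((γ⁻¹ • z : ℍ)).im = z.im / Complex.normSq D := by
    have := im_smul_sl γ⁻¹ z
    rw [inv10, inv11] at this
    rw [this, hD]
    norm_num
    rfl
  have hzim : (0:ℝ) < z.im := z.im_pos
  have hlog : Real.log ((γ⁻¹ • z : ℍ).im) - Real.log z.im = - Real.log (Complex.normSq D) := by
    rw [himq, Real.log_div (ne_of_gt hzim) (ne_of_gt hnsq)]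
    ring
  have hnu := hnup' hlt hfp hfm
  have hmu := hmum' hlt hfp hfm
  set u : ℝ := p - r * Z.re with hu
  have hDre : D.re = u := by rw [hD, hu]; simp; ring
  have hDim : D.im = - (r * Z.im) := by rw [hD]; simp
  have hDval : Complex.normSq D = u^2 + (r * Z.im)^2 := by
    rw [Complex.normSq_apply, hDre, hDim]; ring
  have hcond : (u - (r * xm + s)) * (u - (r * xp + s)) + (r * Z.im)^2 ≤ 0 := by
    have e1 : u - (r * xm + s) = r * (xp - Z.re) := by rw [hu]; linear_combination hnu
    have e2 : u - (r * xp + s) = r * (xm - Z.re) := by rw [hu]; linear_combination hmu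
    rw [e1, e2]
    have key : r * (xp - Z.re) * (r * (xm - Z.re)) + (r * Z.im)^2
        = r^2 * ((Z.re - xp) * (Z.re - xm) + Z.im^2) := by ring
    rw [key]
    exact mul_nonpos_of_nonneg_of_nonpos (sq_nonneg r) hz
  obtain ⟨hlo, hhi⟩ := interval_bound (hmul' hdet hlt hfp hfm) hatt (sq_nonneg (r * Z.im)) hcond
  rw [transLength_eq γ xp xm hdet hlt hfp hfm hatt hrep, hlog]
  rw [abs_neg, abs_le]
  have hμpos : (0:ℝ) < (r * xp + s)^2 := lt_trans zero_lt_one hatt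
  constructor
  · have h8 : Real.log ((((r * xp + s))^2)⁻¹) ≤ Real.log (Complex.normSq D) := by
      apply Real.log_le_log (by positivity)
      rw [hDval] at *
      exact hlo
    rw [Real.log_inv] at h8
    linarith
  · apply Real.log_le_log hnsq
    rw [hDval]
    exact hhi

end TL

lemma seqProd_succ (α : ℕ → SL(2, ℝ)) (n : ℕ) :
    seqProd α (n + 1) = seqProd α n * α (n + 1) := by
  unfold seqProd
  rw [List.range_succ, List.map_append, List.prod_append]
  simp

lemma seqProd_zero (α : ℕ → SL(2, ℝ)) : seqProd α 0 = α 0 := by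
  show ((List.range 1).map α).prod = α 0
  rw [show List.range 1 = [0] from rfl]
  simp

end Aux

theorem busemann_increment_bound
    (α : ℕ → SL(2, ℝ)) (γp γm tax : ℕ → ℝ) (h : IsNestedSequence α γp γm tax) :
    ∀ n : ℕ, |busR α (n + 1) - busR α n| ≤ transLength (α (n + 1)) := by
  intro n
  have hlt : ∀ k, γm k < γp k := fun k => lt_trans (h.minus_neg k) (h.plus_pos k)
  have hdet : ∀ k, (α k) 0 0 * (α k) 1 1 - (α k) 0 1 * (α k) 1 0 = 1 := fun k => det_ent (α k)
  have hfp : ∀ k, IsFixedPt (α k) (γp k) := fun k => (h.attracting k).1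
  have hfm : ∀ k, IsFixedPt (α k) (γm k) := fun k => (h.repelling k).1
  have hatt : ∀ k, 1 < ((α k) 1 0 * γp k + (α k) 1 1)^2 := fun k => (h.attracting k).2
  have hrep : ∀ k, ((α k) 1 0 * γm k + (α k) 1 1)^2 < 1 := fun k => (h.repelling k).2
  -- the axis of `α 0` meets the vertical ray at positive height, so `γp 0 * γm 0 < -1`
  have haxis : dist (vray (tax 0)) (α 0 • vray (tax 0)) = transLength (α 0) :=
    (h.axis_meets 0 (tax 0) (le_of_lt (h.t_pos 0))).mpr rfl
  have hcirc := axis_circle (α 0) (γp 0) (γm 0) (hdet 0) (hlt 0) (hfp 0) (hfm 0)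
    (hatt 0) (hrep 0) (vray (tax 0)) haxis
  have hvre : ((vray (tax 0) : ℍ):ℂ).re = 0 := rfl
  have hvim : ((vray (tax 0) : ℍ):ℂ).im = Real.exp (tax 0) := rfl
  rw [hvre, hvim] at hcirc
  have hexp : 1 < Real.exp (tax 0) := by
    have := Real.exp_lt_exp.mpr (h.t_pos 0)
    rwa [Real.exp_zero] at this
  have hbase0 : γp 0 * γm 0 + 1 < 0 := by nlinarith [hcirc, hexp]
  have hI : (((UpperHalfPlane.I : ℍ):ℂ).re - γp 0) * (((UpperHalfPlane.I : ℍ):ℂ).re - γm 0)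
      + ((UpperHalfPlane.I : ℍ):ℂ).im^2 ≤ 0 := by
    have h1 : ((UpperHalfPlane.I : ℍ):ℂ).re = 0 := rfl
    have h2 : ((UpperHalfPlane.I : ℍ):ℂ).im = 1 := rfl
    rw [h1, h2]
    nlinarith [hbase0]
  -- the inductive invariant
  set z : ℕ → ℍ := fun k => (seqProd α k)⁻¹ • UpperHalfPlane.I with hzdef
  have hz_succ : ∀ k, z (k+1) = (α (k+1))⁻¹ • z k := by
    intro k
    simp only [hzdef]
    rw [seqProd_succ, _root_.mul_inv_rev, mul_smul]
  have hz0 : z 0 = (α 0)⁻¹ • UpperHalfPlane.I := by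
    simp only [hzdef]
    rw [seqProd_zero]
  have hinv : ∀ k, ((z k :ℂ).re - γp (k+1)) * ((z k:ℂ).re - γm (k+1)) + (z k:ℂ).im^2 ≤ 0 := by
    intro k
    induction k with
    | zero =>
      have hstep := (step (α 0) (γp 0) (γm 0) (hlt 0) (hfp 0) (hfm 0) (hatt 0) (hrep 0)
        UpperHalfPlane.I hI).2
      rw [← hz0] at hstep
      have hy : (0:ℝ) < ((z 0 : ℍ):ℂ).im := by
        rw [UpperHalfPlane.coe_im]; exact (z 0).im_pos
      exact D_mono hy (hlt 0) (le_of_lt (h.plus_mono (Nat.lt_succ_self 0)))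
        (le_of_lt (h.minus_anti (Nat.lt_succ_self 0))) hstep
    | succ k ih =>
      have hstep := (step (α (k+1)) (γp (k+1)) (γm (k+1)) (hlt (k+1)) (hfp (k+1)) (hfm (k+1))
        (hatt (k+1)) (hrep (k+1)) (z k) ih).2
      rw [← hz_succ k] at hstep
      have hy : (0:ℝ) < ((z (k+1) : ℍ):ℂ).im := by
        rw [UpperHalfPlane.coe_im]; exact (z (k+1)).im_pos
      exact D_mono hy (hlt (k+1)) (le_of_lt (h.plus_mono (Nat.lt_succ_self (k+1))))
        (le_of_lt (h.minus_anti (Nat.lt_succ_self (k+1)))) hstep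
  -- conclusion
  have hstep := (step (α (n+1)) (γp (n+1)) (γm (n+1)) (hlt (n+1)) (hfp (n+1)) (hfm (n+1))
    (hatt (n+1)) (hrep (n+1)) (z n) (hinv n)).1
  have hbus1 : busR α (n+1) = - Real.log ((z (n+1)).im) := rfl
  have hbus0 : busR α n = - Real.log ((z n).im) := rfl
  have hdiff : busR α (n+1) - busR α n
      = -(Real.log (((α (n+1))⁻¹ • z n : ℍ).im) - Real.log ((z n).im)) := by
    rw [hbus1, hbus0, hz_succ n]
    ring
  rw [hdiff, abs_neg]
  exact hstep

end BellisFormal
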